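/- Let h > 0 and consider the linear map T : ℝⁿ × ℝⁿ × ℝⁿ × ℝⁿ → ℝⁿ × ℝⁿ × ℝⁿ × ℝⁿ given by T(q₀,v₀,q₁,v₁) = (q₁, v₁, 5q₀ − 4q₁ + 2h(v₀ + 2v₁), v₀ + (2/h)(q₀ − 2q₁ + (5q₀ − 4q₁ + 2h(v₀ + 2v₁)))). Then T is a linear isomorphism, and the standard symplectic-type two-form Ω on ℝⁿ×ℝⁿ×ℝⁿ×ℝⁿ pulled back from T*(ℝⁿ×ℝⁿ) via the discrete Legendre transform of L_d^e is preserved by T; concretely, writing p_k = −D₁L_d^e(q_k,v_k,q_{k+1},v_{k+1}), p̃_k = −D₂L_d^e(q_k,v_k,q_{k+1},v_{k+1}), p_{k+1} = D₃L_d^e, p̃_{k+1} = D₄L_d^e, one has dq_{k+1}∧dp_{k+1} + dv_{k+1}∧dp̃_{k+1} = dq_k∧dp_k + dv_k∧dp̃_k. For n = 1, verify that the Jacobian of the induced map (q_k, v_k, p_k, p̃_k) ↦ (q_{k+1}, v_{k+1}, p_{k+1}, p̃_{k+1}) is a symplectic 4×4 matrix. -/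

import Mathlib

/-- The scalar exact discrete Lagrangian for cubic splines (`n = 1`). -/
noncomputable def LdeScalar (h q₀ v₀ q₁ v₁ : ℝ) : ℝ :=
  6 / h ^ 3 * (q₀ - q₁) ^ 2 + 6 / h ^ 2 * (q₀ - q₁) * (v₀ + v₁) +
    2 / h * (v₀ ^ 2 + v₀ * v₁ + v₁ ^ 2)

/-- The standard symplectic matrix on ℝ⁴ (two degrees of freedom). -/
def Jstd : Matrix (Fin 4) (Fin 4) ℝ :=
  !![0, 0, 1, 0; 0, 0, 0, 1; -1, 0, 0, 0; 0, -1, 0, 0]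

lemma quad_deriv (a b c x : ℝ) : deriv (fun t : ℝ => a * t ^ 2 + b * t + c) x = 2 * a * x + b := by
  have h1 : HasDerivAt (fun t : ℝ => a * t ^ 2 + b * t + c) (a * (2 * x ^ 1) + b * 1) x :=
    (((hasDerivAt_pow 2 x).const_mul a).add ((hasDerivAt_id x).const_mul b)).add_const c
  rw [h1.deriv]; ring

lemma deriv1 (h v₀ q₁ v₁ q₀ : ℝ) :
    deriv (fun x => LdeScalar h x v₀ q₁ v₁) q₀ = 12/h^3*(q₀-q₁) + 6/h^2*(v₀+v₁) := by
  have e : (fun x => LdeScalar h x v₀ q₁ v₁) = fun x => (6/h^3) * x ^ 2 +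
      (6/h^2*(v₀+v₁) - 12/h^3*q₁) * x +
      (6/h^3*q₁^2 - 6/h^2*q₁*(v₀+v₁) + 2/h*(v₀^2+v₀*v₁+v₁^2)) := by
    funext x; unfold LdeScalar; ring
  rw [e, quad_deriv]; ring

lemma deriv2 (h q₀ q₁ v₁ v₀ : ℝ) :
    deriv (fun x => LdeScalar h q₀ x q₁ v₁) v₀ = 6/h^2*(q₀-q₁) + 2/h*(2*v₀+v₁) := by
  have e : (fun x => LdeScalar h q₀ x q₁ v₁) = fun x => (2/h) * x ^ 2 +
      (6/h^2*(q₀-q₁) + 2/h*v₁) * x +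
      (6/h^3*(q₀-q₁)^2 + 6/h^2*(q₀-q₁)*v₁ + 2/h*v₁^2) := by
    funext x; unfold LdeScalar; ring
  rw [e, quad_deriv]; ring

lemma deriv3 (h q₀ v₀ v₁ q₁ : ℝ) :
    deriv (fun x => LdeScalar h q₀ v₀ x v₁) q₁ = -(12/h^3)*(q₀-q₁) - 6/h^2*(v₀+v₁) := by
  have e : (fun x => LdeScalar h q₀ v₀ x v₁) = fun x => (6/h^3) * x ^ 2 +
      (-(12/h^3)*q₀ - 6/h^2*(v₀+v₁)) * x +
      (6/h^3*q₀^2 + 6/h^2*q₀*(v₀+v₁) + 2/h*(v₀^2+v₀*v₁+v₁^2)) := by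
    funext x; unfold LdeScalar; ring
  rw [e, quad_deriv]; ring

lemma deriv4 (h q₀ v₀ q₁ v₁ : ℝ) :
    deriv (fun x => LdeScalar h q₀ v₀ q₁ x) v₁ = 6/h^2*(q₀-q₁) + 2/h*(v₀+2*v₁) := by
  have e : (fun x => LdeScalar h q₀ v₀ q₁ x) = fun x => (2/h) * x ^ 2 +
      (6/h^2*(q₀-q₁) + 2/h*v₀) * x +
      (6/h^3*(q₀-q₁)^2 + 6/h^2*(q₀-q₁)*v₀ + 2/h*v₀^2) := by
    funext x; unfold LdeScalar; ring
  rw [e, quad_deriv]; ring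

/-- Symplecticity of the exact cubic-spline variational integrator. The map `T` given by
the discrete flow is a linear isomorphism, and for `n = 1` the induced map
`(q_k, v_k, p_k, p̃_k) ↦ (q_{k+1}, v_{k+1}, p_{k+1}, p̃_{k+1})` (with the momenta defined
through the discrete Legendre transforms of `L_d^e`) is linear with symplectic matrix. -/
theorem exact_spline_integrator_symplectic (n : ℕ) (h : ℝ) (hh : 0 < h)
    (T : (EuclideanSpace ℝ (Fin n) × EuclideanSpace ℝ (Fin n)) ×
        EuclideanSpace ℝ (Fin n) × EuclideanSpace ℝ (Fin n) →
      (EuclideanSpace ℝ (Fin n) × EuclideanSpace ℝ (Fin n)) ×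
        EuclideanSpace ℝ (Fin n) × EuclideanSpace ℝ (Fin n))
    (hT : ∀ q₀ v₀ q₁ v₁ : EuclideanSpace ℝ (Fin n),
      T ((q₀, v₀), (q₁, v₁)) =
        ((q₁, v₁),
          ((5 : ℝ) • q₀ - (4 : ℝ) • q₁ + (2 * h) • (v₀ + (2 : ℝ) • v₁),
           v₀ + (2 / h) • (q₀ - (2 : ℝ) • q₁ +
             ((5 : ℝ) • q₀ - (4 : ℝ) • q₁ + (2 * h) • (v₀ + (2 : ℝ) • v₁)))))) :
    (IsLinearMap ℝ T ∧ Function.Bijective T) ∧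
    ∃ M : Matrix (Fin 4) (Fin 4) ℝ,
      (∀ q₀ v₀ q₁ v₁ : ℝ,
        M.mulVec
          ![q₀, v₀,
            -(deriv (fun x => LdeScalar h x v₀ q₁ v₁) q₀),
            -(deriv (fun x => LdeScalar h q₀ x q₁ v₁) v₀)] =
          ![q₁, v₁,
            deriv (fun x => LdeScalar h q₀ v₀ x v₁) q₁,
            deriv (fun x => LdeScalar h q₀ v₀ q₁ x) v₁]) ∧
      M.transpose * Jstd * M = Jstd := by
  have hne : h ≠ 0 := hh.ne'
  constructor
  · constructor
    · constructor
      · rintro ⟨⟨q₀, v₀⟩, q₁, v₁⟩ ⟨⟨q₀', v₀'⟩, q₁', v₁'⟩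
        show T ((q₀ + q₀', v₀ + v₀'), (q₁ + q₁', v₁ + v₁')) = _
        rw [hT, hT, hT]
        simp only [Prod.mk_add_mk, Prod.mk.injEq]
        and_intros <;> first | trivial | module
      · rintro c ⟨⟨q₀, v₀⟩, q₁, v₁⟩
        show T ((c • q₀, c • v₀), (c • q₁, c • v₁)) = _
        rw [hT, hT]
        simp only [Prod.smul_mk, Prod.mk.injEq]
        and_intros <;> first | trivial | module
    · rw [Function.bijective_iff_has_inverse]
      refine ⟨fun x => (((5 : ℝ) • x.2.1 - (4 : ℝ) • x.1.1 - (4 * h) • x.1.2 - (2 * h) • x.2.2,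
          (8 : ℝ) • x.1.2 + (5 : ℝ) • x.2.2 + (12 / h) • (x.1.1 - x.2.1)),
          (x.1.1, x.1.2)), ?_, ?_⟩
      · rintro ⟨⟨q₀, v₀⟩, q₁, v₁⟩
        rw [hT]
        simp only [Prod.mk.injEq]
        and_intros <;>
          first
          | trivial
          | (ext i
             simp only [PiLp.smul_apply, PiLp.add_apply, PiLp.sub_apply, smul_eq_mul]
             field_simp
             try ring)
      · rintro ⟨⟨q₀, v₀⟩, q₁, v₁⟩
        simp only
        rw [hT]
        simp only [Prod.mk.injEq]
        and_intros <;>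
          first
          | trivial
          | (ext i
             simp only [PiLp.smul_apply, PiLp.add_apply, PiLp.sub_apply, smul_eq_mul]
             field_simp
             try ring)
  · refine ⟨!![1, h, -h^3/6, h^2/2; 0, 1, -h^2/2, h; 0, 0, 1, 0; 0, 0, -h, 1], ?_, ?_⟩
    · intro q₀ v₀ q₁ v₁
      rw [deriv1, deriv2, deriv3, deriv4]
      funext i
      fin_cases i <;>
        · simp [Matrix.mulVec, dotProduct, Fin.sum_univ_four]
          field_simp
          ring
    · ext i j
      fin_cases i <;> fin_cases j <;>
        simp [Jstd, Matrix.mul_apply, Matrix.transpose_apply, Fin.sum_univ_four,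
          Matrix.vecHead, Matrix.vecTail] <;> ring
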